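/- arXiv:2512.03884 — 2 statements merged into one kernel-verified Lean document; each statement's English description precedes it below -/
import Mathlib

section
/- Let α be a badly approximable real number and let 1 < θ < θ' be real constants. Then for every real δ with 0 < δ ≤ 1/2, the sum over all positive integers m with ‖mα‖ ≥ δ of 1/(m^θ ‖mα‖^{θ'}) is O(δ^{θ−θ'}), with implied constant depending only on α, θ, θ'. -/
open scoped Real ENNReal

/-- Distance from a real number to the nearest integer. -/
noncomputable def nd (x : ℝ) : ℝ := |x - round x|

/-- A real number is badly approximable if `‖qα‖ ≥ C/q` for all positive integers `q`. -/
def BadlyApprox (α : ℝ) : Prop := ∃ C > 0, ∀ q : ℕ, 0 < q → C / q ≤ nd (q * α)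

lemma nd_le_int (x : ℝ) (n : ℤ) : nd x ≤ |x - n| := by
  by_cases h : |x - n| < 1/2
  · have hr : round (x - n) = 0 := by
      rw [round_eq_zero_iff]
      constructor
      · linarith [abs_lt.1 h |>.1]
      · linarith [abs_lt.1 h |>.2]
    have hx : round x = n := by
      have := round_add_intCast (x - n) n
      simp only [hr] at this
      symm; simpa using this.symm
    simp [nd, hx]
  · exact le_trans (abs_sub_round x) (not_lt.1 h)

lemma nd_sub_le (a b : ℝ) : nd (a - b) ≤ nd a + nd b := by
  calc nd (a - b) ≤ |(a - b) - ((round a - round b : ℤ) : ℝ)| := nd_le_int _ _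
    _ = |(a - round a) - (b - round b)| := by push_cast; ring_nf
    _ ≤ |a - round a| + |b - round b| := abs_sub _ _
    _ = nd a + nd b := rfl

noncomputable def kfun (α δ : ℝ) (m : ℕ) : ℕ := Nat.log 2 ⌊nd (m * α) / δ⌋₊

noncomputable def jfun (α δ C : ℝ) (m : ℕ) : ℕ :=
  ⌊(m:ℝ) / (C / ((2:ℝ) ^ (kfun α δ m + 2) * δ))⌋₊

lemma kfun_facts {α δ : ℝ} (hδ : 0 < δ) (m : ℕ) (hδν : δ ≤ nd (m * α)) :
    (2:ℝ) ^ (kfun α δ m) * δ ≤ nd (m * α) ∧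
      nd (m * α) < (2:ℝ) ^ (kfun α δ m + 1) * δ := by
  have hν0 : 0 < nd (m * α) := lt_of_lt_of_le hδ hδν
  have hfl1 : 1 ≤ ⌊nd (m * α) / δ⌋₊ :=
    Nat.le_floor (by rw [Nat.cast_one]; exact (one_le_div hδ).2 hδν)
  constructor
  · have h1 : (2:ℕ) ^ (kfun α δ m) ≤ ⌊nd (m * α) / δ⌋₊ := Nat.pow_log_le_self 2 (by omega)
    have h2 : (⌊nd (m * α) / δ⌋₊ : ℝ) ≤ nd (m * α) / δ := Nat.floor_le (by positivity)
    have h3 : ((2:ℝ)) ^ (kfun α δ m) ≤ nd (m * α) / δ := le_trans (by exact_mod_cast h1) h2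
    have := mul_le_mul_of_nonneg_right h3 hδ.le
    rwa [div_mul_cancel₀ _ (ne_of_gt hδ)] at this
  · have h1 : ⌊nd (m * α) / δ⌋₊ < 2 ^ (kfun α δ m + 1) :=
      Nat.lt_pow_succ_log_self one_lt_two _
    have h2 : nd (m * α) / δ < (⌊nd (m * α) / δ⌋₊ : ℝ) + 1 := Nat.lt_floor_add_one _
    have h3 : ((⌊nd (m * α) / δ⌋₊ : ℝ) + 1) ≤ (2:ℝ) ^ (kfun α δ m + 1) := by
      have : (⌊nd (m * α) / δ⌋₊ + 1 : ℕ) ≤ 2 ^ (kfun α δ m + 1) := h1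
      exact_mod_cast this
    have h4 : nd (m * α) / δ < (2:ℝ) ^ (kfun α δ m + 1) := lt_of_lt_of_le h2 h3
    have := mul_lt_mul_of_pos_right h4 hδ
    rwa [div_mul_cancel₀ _ (ne_of_gt hδ)] at this

lemma jfun_facts {α δ C : ℝ} (hδ : 0 < δ) (hC : 0 < C) (m : ℕ) (hm : 0 < m)
    (hδν : δ ≤ nd (m * α)) (hlow : C / (m:ℝ) ≤ nd (m * α)) :
    1 ≤ jfun α δ C m ∧ (jfun α δ C m : ℝ) * (C / ((2:ℝ) ^ (kfun α δ m + 2) * δ)) ≤ m := by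
  obtain ⟨hk1, hk2⟩ := kfun_facts hδ m hδν
  have hd : 0 < C / ((2:ℝ) ^ (kfun α δ m + 2) * δ) := by positivity
  have hm0 : (0:ℝ) < m := by exact_mod_cast hm
  have hpow : (2:ℝ) ^ (kfun α δ m + 1) ≤ (2:ℝ) ^ (kfun α δ m + 2) :=
    pow_le_pow_right₀ (by norm_num) (by omega)
  have hmd : C / ((2:ℝ) ^ (kfun α δ m + 2) * δ) ≤ m := by
    rw [div_le_iff₀ (by positivity)]
    rw [div_le_iff₀ hm0] at hlow
    nlinarith [mul_lt_mul_of_pos_left hk2 hm0,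
      mul_le_mul_of_nonneg_left (mul_le_mul_of_nonneg_right hpow hδ.le) hm0.le]
  constructor
  · exact Nat.le_floor (by rw [Nat.cast_one]; exact (one_le_div hd).2 hmd)
  · have h5 : (jfun α δ C m : ℝ) ≤ (m:ℝ) / (C / ((2:ℝ) ^ (kfun α δ m + 2) * δ)) :=
      Nat.floor_le (by positivity)
    have := mul_le_mul_of_nonneg_right h5 hd.le
    rwa [div_mul_cancel₀ _ (ne_of_gt hd)] at this

lemma jfun_mono {α δ C : ℝ} (hδ : 0 < δ) (hC : 0 < C)
    (hbad : ∀ q : ℕ, 0 < q → C / q ≤ nd (q * α)) (m m' : ℕ)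
    (hm : 0 < m) (hm' : 0 < m') (hmδ : δ ≤ nd (m * α)) (hm'δ : δ ≤ nd (m' * α))
    (hlt : m < m') (hkk : kfun α δ m = kfun α δ m') :
    jfun α δ C m < jfun α δ C m' := by
  obtain ⟨hk1, hk2⟩ := kfun_facts hδ m hmδ
  obtain ⟨hk1', hk2'⟩ := kfun_facts hδ m' hm'δ
  rw [← hkk] at hk2'
  have hd : 0 < C / ((2:ℝ) ^ (kfun α δ m + 2) * δ) := by positivity
  have hcast : ((m' - m : ℕ) : ℝ) = (m' : ℝ) - m := by
    push_cast [Nat.cast_sub hlt.le]; ring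
  have hsub : nd (((m' - m : ℕ) : ℝ) * α) ≤ nd (m' * α) + nd (m * α) := by
    have h : ((m' - m : ℕ) : ℝ) * α = (m' : ℝ) * α - (m : ℝ) * α := by rw [hcast]; ring
    rw [h]; exact nd_sub_le _ _
  have hq : 0 < m' - m := by omega
  have hb := hbad (m' - m) hq
  have hsum2 : nd (m' * α) + nd (m * α) < (2:ℝ) ^ (kfun α δ m + 2) * δ := by
    have h2' : (2:ℝ) ^ (kfun α δ m + 2) * δ
        = 2 ^ (kfun α δ m + 1) * δ + 2 ^ (kfun α δ m + 1) * δ := by rw [pow_succ]; ring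
    rw [h2']; linarith
  have hx0 : (0:ℝ) < ((m' - m : ℕ) : ℝ) := by exact_mod_cast hq
  have hC2 : C < ((m' - m : ℕ) : ℝ) * ((2:ℝ) ^ (kfun α δ m + 2) * δ) := by
    have := lt_of_le_of_lt hb (lt_of_le_of_lt hsub hsum2)
    rw [div_lt_iff₀ hx0] at this
    nlinarith
  have hdm : C / ((2:ℝ) ^ (kfun α δ m + 2) * δ) < ((m' - m : ℕ) : ℝ) := by
    rw [div_lt_iff₀ (by positivity)]
    nlinarith
  -- Now show jfun m + 1 ≤ jfun m'
  have hfl : (jfun α δ C m : ℝ) ≤ (m : ℝ) / (C / ((2:ℝ) ^ (kfun α δ m + 2) * δ)) :=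
    Nat.floor_le (by positivity)
  have key : ((jfun α δ C m + 1 : ℕ) : ℝ)
      ≤ (m' : ℝ) / (C / ((2:ℝ) ^ (kfun α δ m' + 2) * δ)) := by
    rw [← hkk]
    have h1 : (1:ℝ) < ((m' - m : ℕ) : ℝ) / (C / ((2:ℝ) ^ (kfun α δ m + 2) * δ)) :=
      (one_lt_div hd).2 hdm
    have h2 : (m' : ℝ) / (C / ((2:ℝ) ^ (kfun α δ m + 2) * δ))
        = (m : ℝ) / (C / ((2:ℝ) ^ (kfun α δ m + 2) * δ))
          + ((m' - m : ℕ) : ℝ) / (C / ((2:ℝ) ^ (kfun α δ m + 2) * δ)) := by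
      rw [hcast, ← add_div]; ring_nf
    push_cast
    rw [h2]
    linarith
  have h6 : jfun α δ C m + 1 ≤ jfun α δ C m' := by
    conv_rhs => rw [jfun]
    exact Nat.le_floor key
  omega


lemma pointwise_alg (C δ θ θ' : ℝ) (hC : 0 < C) (hδ : 0 < δ)
    (k j : ℕ) (hj0 : (0:ℝ) < j) :
    ((j:ℝ) * (C / ((2:ℝ)^(k+2) * δ)))^(-θ) * ((2:ℝ)^k * δ)^(-θ')
      = (4/C)^θ * δ^(θ-θ') * ((2:ℝ)^(θ-θ'))^k * (j:ℝ)^(-θ) := by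
  have hk2 : ((2:ℝ))^(k+2) = (2:ℝ) ^ ((k:ℝ)+2) := by
    rw [← Real.rpow_natCast 2 (k+2)]; push_cast; norm_num
  have hkk : ((2:ℝ))^k = (2:ℝ) ^ (k:ℝ) := (Real.rpow_natCast 2 k).symm
  have hr : ((2:ℝ)^(θ-θ'))^k = (2:ℝ)^((θ-θ')*(k:ℝ)) := by
    rw [← Real.rpow_natCast ((2:ℝ)^(θ-θ')) k, ← Real.rpow_mul (by norm_num)]
  have h4 : (4:ℝ) = (2:ℝ)^(2:ℝ) := by
    rw [show (2:ℝ) = ((2:ℕ):ℝ) by norm_num, Real.rpow_natCast]; norm_num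
  rw [hk2, hkk, hr, h4]
  have p1 : (0:ℝ) < (j:ℝ) * (C / ((2:ℝ)^((k:ℝ)+2) * δ)) := by positivity
  have p2 : (0:ℝ) < (2:ℝ)^((k:ℝ)) * δ := by positivity
  have p3 : (0:ℝ) < (2:ℝ)^(2:ℝ)/C := by positivity
  refine Real.log_injOn_pos (Set.mem_Ioi.mpr ?_) (Set.mem_Ioi.mpr ?_) ?_
  · exact mul_pos (Real.rpow_pos_of_pos p1 _) (Real.rpow_pos_of_pos p2 _)
  · exact mul_pos (mul_pos (mul_pos (Real.rpow_pos_of_pos p3 _) (Real.rpow_pos_of_pos hδ _))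
      (Real.rpow_pos_of_pos two_pos _)) (Real.rpow_pos_of_pos hj0 _)
  · have n1 : ((j:ℝ) * (C / ((2:ℝ)^((k:ℝ)+2) * δ)))^(-θ) ≠ 0 := ne_of_gt (Real.rpow_pos_of_pos p1 _)
    have n2 : ((2:ℝ)^((k:ℝ)) * δ)^(-θ') ≠ 0 := ne_of_gt (Real.rpow_pos_of_pos p2 _)
    have n3 : ((2:ℝ)^(2:ℝ)/C)^θ ≠ 0 := ne_of_gt (Real.rpow_pos_of_pos p3 _)
    have n4 : δ^(θ-θ') ≠ 0 := ne_of_gt (Real.rpow_pos_of_pos hδ _)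
    have n5 : (2:ℝ)^((θ-θ')*(k:ℝ)) ≠ 0 := ne_of_gt (Real.rpow_pos_of_pos two_pos _)
    have n6 : ((j:ℝ))^(-θ) ≠ 0 := ne_of_gt (Real.rpow_pos_of_pos hj0 _)
    rw [Real.log_mul n1 n2, Real.log_mul (by positivity) n6, Real.log_mul (by positivity) n5,
      Real.log_mul n3 n4, Real.log_rpow p1, Real.log_rpow p2, Real.log_rpow p3,
      Real.log_rpow hδ, Real.log_rpow hj0,
      Real.log_mul (ne_of_gt hj0) (by positivity),
      Real.log_div (ne_of_gt hC) (by positivity),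
      Real.log_mul (by positivity) (ne_of_gt hδ),
      Real.log_mul (by positivity) (ne_of_gt hδ),
      Real.log_div (by positivity) (ne_of_gt hC)]
    simp only [Real.log_rpow two_pos]
    ring

lemma pointwise_bound (C δ θ θ' : ℝ) (hC : 0 < C) (hδ : 0 < δ) (hθ : 0 < θ) (hθ'0 : 0 < θ')
    (m k j : ℕ) (ν : ℝ)
    (hν1 : (2:ℝ)^k * δ ≤ ν)
    (hj0 : 1 ≤ j) (hj2 : (j:ℝ) * (C / ((2:ℝ)^(k+2) * δ)) ≤ m) :
    1 / ((m:ℝ)^θ * ν^θ') ≤ (4/C)^θ * δ^(θ-θ') * ((2:ℝ)^(θ-θ'))^k * (j:ℝ)^(-θ) := by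
  have hjR : (0:ℝ) < j := by exact_mod_cast hj0
  have hX : (0:ℝ) < (j:ℝ) * (C/((2:ℝ)^(k+2)*δ)) := by positivity
  have hm0 : (0:ℝ) < m := lt_of_lt_of_le hX hj2
  have hν0 : 0 < ν := lt_of_lt_of_le (by positivity) hν1
  rw [← pointwise_alg C δ θ θ' hC hδ k j hjR]
  have e : 1 / ((m:ℝ)^θ * ν^θ') = (m:ℝ)^(-θ) * ν^(-θ') := by
    rw [Real.rpow_neg hm0.le, Real.rpow_neg hν0.le, one_div, mul_inv]
  rw [e]
  exact mul_le_mul (Real.rpow_le_rpow_of_nonpos hX hj2 (by linarith))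
    (Real.rpow_le_rpow_of_nonpos (by positivity) hν1 (by linarith))
    (Real.rpow_nonneg hν0.le _) (Real.rpow_nonneg hX.le _)



lemma main_core (α C θ θ' : ℝ) (hC : 0 < C) (hθ : 1 < θ) (hθ' : θ < θ')
    (hbad : ∀ q : ℕ, 0 < q → C / q ≤ nd (q * α)) (δ : ℝ) (hδ : 0 < δ) :
    (∑' m : ℕ, if 0 < m ∧ δ ≤ nd (m * α) then
        1 / ((m : ℝ) ^ θ * nd (m * α) ^ θ') else 0)
      ≤ ((4/C)^θ * ((1 - (2:ℝ)^(θ-θ'))⁻¹ * (∑' j : ℕ, (j:ℝ)^(-θ)))) * δ ^ (θ - θ') := by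
  have hr0 : (0:ℝ) < 2 ^ (θ - θ') := Real.rpow_pos_of_pos two_pos _
  have hr1 : (2:ℝ) ^ (θ - θ') < 1 :=
    Real.rpow_lt_one_of_one_lt_of_neg one_lt_two (by linarith)
  have h1r : (0:ℝ) < 1 - 2 ^ (θ - θ') := by linarith
  have hsumj : Summable (fun j : ℕ => (j:ℝ) ^ (-θ)) := Real.summable_nat_rpow.2 (by linarith)
  have hZ0 : 0 ≤ ∑' j : ℕ, (j:ℝ) ^ (-θ) :=
    tsum_nonneg fun j => Real.rpow_nonneg (Nat.cast_nonneg j) _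
  set F : ℕ → ℝ := fun m => if 0 < m ∧ δ ≤ nd (m * α) then
      1 / ((m : ℝ) ^ θ * nd (m * α) ^ θ') else 0 with hFdef
  have hF0 : ∀ m, 0 ≤ F m := by
    intro m
    by_cases h : 0 < m ∧ δ ≤ nd (m * α)
    · have hν : 0 < nd (m * α) := lt_of_lt_of_le hδ h.2
      have hm : (0:ℝ) < m := by exact_mod_cast h.1
      simp only [hFdef, if_pos h]
      positivity
    · simp [hFdef, if_neg h]
  set S : Set ℕ := {m | 0 < m ∧ δ ≤ nd (m * α)} with hSdef
  set A : ℝ := (4/C)^θ * δ^(θ-θ') with hAdef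
  have hA0 : 0 ≤ A := by positivity
  set H : ℕ × ℕ → ℝ≥0∞ := fun p =>
    ENNReal.ofReal (A * ((2:ℝ)^(θ-θ'))^p.1 * (p.2:ℝ)^(-θ)) with hHdef
  -- pointwise bound
  have hpoint : ∀ m : ℕ, m ∈ S → ENNReal.ofReal (F m) ≤ H (kfun α δ m, jfun α δ C m) := by
    intro m hm
    obtain ⟨hm0, hmδ⟩ := hm
    obtain ⟨hk1, _⟩ := kfun_facts hδ m hmδ
    obtain ⟨hj1, hj2⟩ := jfun_facts hδ hC m hm0 hmδ (hbad m hm0)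
    have hb := pointwise_bound C δ θ θ' hC hδ (by linarith) (by linarith) m
      (kfun α δ m) (jfun α δ C m) (nd (m * α)) hk1 hj1 hj2
    simp only [hFdef, if_pos (⟨hm0, hmδ⟩ : 0 < m ∧ δ ≤ nd (m * α)), hHdef, hAdef]
    exact ENNReal.ofReal_le_ofReal hb
  -- injectivity
  have hinj : Function.Injective
      (fun s : S => ((kfun α δ s.1, jfun α δ C s.1) : ℕ × ℕ)) := by
    intro s t h
    have h1 : kfun α δ s.1 = kfun α δ t.1 := congrArg Prod.fst h
    have h2 : jfun α δ C s.1 = jfun α δ C t.1 := congrArg Prod.snd h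
    obtain ⟨hs1, hs2⟩ := s.2
    obtain ⟨ht1, ht2⟩ := t.2
    rcases lt_trichotomy s.1 t.1 with hlt | heq | hgt
    · exact absurd h2 (Nat.ne_of_lt (jfun_mono hδ hC hbad _ _ hs1 ht1 hs2 ht2 hlt h1))
    · exact Subtype.ext heq
    · exact absurd h2.symm (Nat.ne_of_lt (jfun_mono hδ hC hbad _ _ ht1 hs1 ht2 hs2 hgt h1.symm))
  -- chain in ENNReal
  have hgeom : Summable (fun k : ℕ => A * ((2:ℝ)^(θ-θ'))^k) :=
    (summable_geometric_of_lt_one hr0.le hr1).mul_left A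
  have hHsum : (∑' p : ℕ × ℕ, H p)
      = ENNReal.ofReal ((A * (1 - (2:ℝ)^(θ-θ'))⁻¹) * (∑' j : ℕ, (j:ℝ)^(-θ))) := by
    rw [ENNReal.tsum_prod']
    have inner : ∀ k : ℕ, (∑' j : ℕ, H (k, j))
        = ENNReal.ofReal (A * ((2:ℝ)^(θ-θ'))^k) * ENNReal.ofReal (∑' j : ℕ, (j:ℝ)^(-θ)) := by
      intro k
      have e1 : ∀ j : ℕ, H (k, j)
          = ENNReal.ofReal (A * ((2:ℝ)^(θ-θ'))^k) * ENNReal.ofReal ((j:ℝ)^(-θ)) := by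
        intro j
        rw [hHdef]
        exact ENNReal.ofReal_mul (by positivity)
      rw [tsum_congr e1, ENNReal.tsum_mul_left,
        ENNReal.ofReal_tsum_of_nonneg (fun j => Real.rpow_nonneg (Nat.cast_nonneg j) _) hsumj]
    rw [tsum_congr inner, ENNReal.tsum_mul_right,
      ← ENNReal.ofReal_tsum_of_nonneg (fun k => by positivity) hgeom,
      tsum_mul_left, tsum_geometric_of_lt_one hr0.le hr1,
      ← ENNReal.ofReal_mul (by positivity)]
  have hsupp : Function.support (fun m : ℕ => ENNReal.ofReal (F m)) ⊆ S := by
    intro m hm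
    by_contra hns
    have h0 : F m = 0 := by simp only [hFdef]; exact if_neg hns
    simp [Function.mem_support, h0] at hm
  have step1 : (∑' m : ℕ, ENNReal.ofReal (F m))
      ≤ ENNReal.ofReal ((A * (1 - (2:ℝ)^(θ-θ'))⁻¹) * (∑' j : ℕ, (j:ℝ)^(-θ))) := by
    calc (∑' m : ℕ, ENNReal.ofReal (F m))
        = ∑' (s : S), ENNReal.ofReal (F s) := (tsum_subtype_eq_of_support_subset hsupp).symm
      _ ≤ ∑' (s : S), H (kfun α δ s.1, jfun α δ C s.1) :=
          ENNReal.tsum_le_tsum (fun s => hpoint s.1 s.2)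
      _ ≤ ∑' p : ℕ × ℕ, H p := ENNReal.tsum_comp_le_tsum_of_injective hinj H
      _ = _ := hHsum
  have e2 : (∑' m : ℕ, F m) = (∑' m : ℕ, ENNReal.ofReal (F m)).toReal := by
    rw [ENNReal.tsum_toReal_eq (fun m => ENNReal.ofReal_ne_top)]
    exact tsum_congr fun m => (ENNReal.toReal_ofReal (hF0 m)).symm
  have hBnn : 0 ≤ (A * (1 - (2:ℝ)^(θ-θ'))⁻¹) * (∑' j : ℕ, (j:ℝ)^(-θ)) :=
    mul_nonneg (mul_nonneg hA0 (inv_nonneg.2 h1r.le)) hZ0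
  calc (∑' m : ℕ, F m)
      = (∑' m : ℕ, ENNReal.ofReal (F m)).toReal := e2
    _ ≤ (ENNReal.ofReal ((A * (1 - (2:ℝ)^(θ-θ'))⁻¹) * (∑' j : ℕ, (j:ℝ)^(-θ)))).toReal :=
        ENNReal.toReal_mono ENNReal.ofReal_ne_top step1
    _ = (A * (1 - (2:ℝ)^(θ-θ'))⁻¹) * (∑' j : ℕ, (j:ℝ)^(-θ)) := ENNReal.toReal_ofReal hBnn
    _ = ((4/C)^θ * ((1 - (2:ℝ)^(θ-θ'))⁻¹ * (∑' j : ℕ, (j:ℝ)^(-θ)))) * δ ^ (θ - θ') := by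
        rw [hAdef]; ring


theorem stmt1 (α : ℝ) (hα : BadlyApprox α) (θ θ' : ℝ) (hθ : 1 < θ) (hθ' : θ < θ') :
    ∃ K > 0, ∀ δ : ℝ, 0 < δ → δ ≤ 1 / 2 →
      (∑' m : ℕ, if 0 < m ∧ δ ≤ nd (m * α) then
          1 / ((m : ℝ) ^ θ * nd (m * α) ^ θ') else 0) ≤ K * δ ^ (θ - θ') := by
  obtain ⟨C, hC, hbad⟩ := hα
  have hr1 : (2:ℝ) ^ (θ - θ') < 1 :=
    Real.rpow_lt_one_of_one_lt_of_neg one_lt_two (by linarith)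
  have hsumj : Summable (fun j : ℕ => (j:ℝ) ^ (-θ)) := Real.summable_nat_rpow.2 (by linarith)
  have hZ1 : (1:ℝ) ≤ ∑' j : ℕ, (j:ℝ) ^ (-θ) := by
    have := Summable.le_tsum hsumj 1 (fun j _ => Real.rpow_nonneg (Nat.cast_nonneg j) _)
    simpa using this
  refine ⟨(4/C)^θ * ((1 - (2:ℝ)^(θ-θ'))⁻¹ * (∑' j : ℕ, (j:ℝ)^(-θ))),
    mul_pos (Real.rpow_pos_of_pos (by positivity) _)
      (mul_pos (inv_pos.2 (by linarith)) (by linarith)), ?_⟩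
  intro δ hδ _
  exact main_core α C θ θ' hC hθ hθ' hbad δ hδ
end

section
/- Let X be a nondegenerate integer-valued random variable (its support has at least two elements) with characteristic function φ(x) = E(e^{ixX}), and let L = gcd of the support of X. Then |1 − φ(2πx)| ≫ ‖Lx‖² uniformly in x ∈ ℝ, where ‖·‖ is the distance to the nearest integer. -/
open scoped Real
open MeasureTheory

lemma nd_eq (x : ℝ) : nd x = ‖(x : UnitAddCircle)‖ := UnitAddCircle.norm_eq.symm

lemma nd_nonneg (x : ℝ) : 0 ≤ nd x := abs_nonneg _

lemma nd_zero : nd 0 = 0 := by simp [nd]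

lemma nd_neg (x : ℝ) : nd (-x) = nd x := by
  rw [nd_eq, nd_eq]
  have : ((-x : ℝ) : UnitAddCircle) = -(x : UnitAddCircle) := rfl
  rw [this, norm_neg]

lemma nd_add_le (a b : ℝ) : nd (a + b) ≤ nd a + nd b := by
  rw [nd_eq, nd_eq, nd_eq]
  have : ((a + b : ℝ) : UnitAddCircle) = (a : UnitAddCircle) + b := rfl
  rw [this]
  exact norm_add_le _ _

lemma key_cos (θ : ℝ) : 8 * nd θ ^ 2 ≤ 1 - Real.cos (2 * π * θ) := by
  have h1 : Real.cos (2 * π * θ) = Real.cos (2 * π * (θ - round θ)) := by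
    rw [← Real.cos_add_int_mul_two_pi (2 * π * (θ - (round θ : ℝ))) (round θ)]
    ring_nf
  set r : ℝ := θ - round θ with hr
  have hnd : nd θ = |r| := rfl
  have hr2 : |r| ≤ 1 / 2 := abs_sub_round θ
  have h2 : 1 - Real.cos (2 * π * r) = 2 * Real.sin (π * r) ^ 2 := by
    have h : 2 * π * r = 2 * (π * r) := by ring
    rw [h, Real.cos_two_mul, Real.cos_sq']; ring
  have h3 : 2 * |r| ≤ |Real.sin (π * r)| := by
    have hπ : (0:ℝ) < π := Real.pi_pos
    have habs : |Real.sin (π * r)| = |Real.sin (π * |r|)| := by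
      rcases abs_cases r with ⟨h, _⟩ | ⟨h, _⟩
      · rw [h]
      · rw [h, mul_neg, Real.sin_neg, abs_neg]
    have h0 : 0 ≤ π * |r| := by positivity
    have h1' : π * |r| ≤ π / 2 := by
      rw [div_eq_mul_inv]
      calc π * |r| ≤ π * (1/2) := by nlinarith
        _ = π * 2⁻¹ := by ring
    have := Real.mul_le_sin h0 h1'
    have h2r : 2 * |r| ≤ Real.sin (π * |r|) := by
      have : 2 / π * (π * |r|) = 2 * |r| := by field_simp
      linarith [this ▸ Real.mul_le_sin h0 h1']
    calc 2 * |r| ≤ Real.sin (π * |r|) := h2r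
      _ ≤ |Real.sin (π * |r|)| := le_abs_self _
      _ = |Real.sin (π * r)| := habs.symm
  rw [h1, h2, hnd]
  nlinarith [abs_nonneg r, sq_abs (Real.sin (π * r)), abs_nonneg (Real.sin (π * r))]

lemma exp_I_re (t : ℝ) (n : ℤ) :
    (Complex.exp (Complex.I * (t : ℂ) * (n : ℂ))).re = Real.cos (t * (n : ℝ)) := by
  have h : Complex.I * (t : ℂ) * (n : ℂ) = (((t * (n : ℝ)) : ℝ) : ℂ) * Complex.I := by
    push_cast; ring
  rw [h, Complex.exp_ofReal_mul_I_re]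

lemma exp_I_norm (t : ℝ) (n : ℤ) :
    ‖Complex.exp (Complex.I * (t : ℂ) * (n : ℂ))‖ ≤ 1 := by
  have h : Complex.I * (t : ℂ) * (n : ℂ) = (((t * (n : ℝ)) : ℝ) : ℂ) * Complex.I := by
    push_cast; ring
  rw [h]
  rw [Complex.norm_exp_ofReal_mul_I]

theorem stmt5 {Ω : Type*} [MeasurableSpace Ω] (μ : Measure Ω) [IsProbabilityMeasure μ]
    (X : Ω → ℤ) (hX : Measurable X)
    (hnondeg : ¬ ∃ n : ℤ, ∀ᵐ ω ∂μ, X ω = n)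
    (L : ℕ)
    (hLdvd : ∀ n : ℤ, 0 < μ (X ⁻¹' {n}) → (L : ℤ) ∣ n)
    (hLmax : ∀ M : ℕ, (∀ n : ℤ, 0 < μ (X ⁻¹' {n}) → (M : ℤ) ∣ n) → M ∣ L)
    (φ : ℝ → ℂ) (hφ : ∀ t : ℝ, φ t = ∫ ω, Complex.exp (Complex.I * t * (X ω : ℂ)) ∂μ) :
    ∃ c > 0, ∀ x : ℝ, c * nd (L * x) ^ 2 ≤ ‖1 - φ (2 * π * x)‖ := by
  classical
  -- generic integrability of bounded functions of X
  have hintg : ∀ (g : ℤ → ℝ) (C : ℝ), (∀ n, |g n| ≤ C) →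
      Integrable (fun ω => g (X ω)) μ := by
    intro g C hC
    exact (integrable_const C).mono'
      ((measurable_of_countable g).comp hX).aestronglyMeasurable
      (Filter.Eventually.of_forall fun ω => by simpa using hC (X ω))
  have hint : ∀ x : ℝ, Integrable (fun ω => nd ((X ω : ℝ) * x) ^ 2) μ := by
    intro x
    refine hintg (fun n => nd ((n : ℝ) * x) ^ 2) 1 fun n => ?_
    have h1 := nd_nonneg ((n : ℝ) * x)
    have h2 : nd ((n : ℝ) * x) ≤ 1/2 := abs_sub_round _
    show |nd ((n : ℝ) * x) ^ 2| ≤ 1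
    rw [abs_of_nonneg (by positivity)]
    nlinarith
  have hIntNonneg : ∀ x : ℝ, 0 ≤ ∫ ω, nd ((X ω : ℝ) * x) ^ 2 ∂μ := fun x =>
    integral_nonneg fun ω => by positivity
  set S : Set ℤ := {n | μ (X ⁻¹' {n}) ≠ 0} with hSdef
  -- support points satisfy the bound
  have hsupp : ∀ n ∈ S, ∃ C : ℝ, 0 ≤ C ∧
      ∀ x : ℝ, nd ((n : ℝ) * x) ^ 2 ≤ C * ∫ ω, nd ((X ω : ℝ) * x) ^ 2 ∂μ := by
    intro n hn
    have hfin : μ (X ⁻¹' {n}) ≠ ⊤ := measure_ne_top μ _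
    have hp : 0 < (μ (X ⁻¹' {n})).toReal := ENNReal.toReal_pos hn hfin
    refine ⟨(μ (X ⁻¹' {n})).toReal⁻¹, by positivity, fun x => ?_⟩
    have hset : ∫ ω in X ⁻¹' {n}, nd ((X ω : ℝ) * x) ^ 2 ∂μ
        = (μ (X ⁻¹' {n})).toReal * nd ((n : ℝ) * x) ^ 2 := by
      rw [setIntegral_congr_fun (hX (measurableSet_singleton n))
        (fun ω hω => by simp only [Set.mem_preimage, Set.mem_singleton_iff] at hω; rw [hω])]
      rw [setIntegral_const]
      simp [smul_eq_mul, Measure.real_def]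
    have hle : ∫ ω in X ⁻¹' {n}, nd ((X ω : ℝ) * x) ^ 2 ∂μ
        ≤ ∫ ω, nd ((X ω : ℝ) * x) ^ 2 ∂μ :=
      setIntegral_le_integral (hint x) (Filter.Eventually.of_forall fun ω => by positivity)
    rw [hset] at hle
    rw [inv_mul_eq_div, le_div_iff₀ hp]
    linarith
  -- closure induction
  have hP : ∀ n ∈ AddSubgroup.closure S, ∃ C : ℝ, 0 ≤ C ∧
      ∀ x : ℝ, nd ((n : ℝ) * x) ^ 2 ≤ C * ∫ ω, nd ((X ω : ℝ) * x) ^ 2 ∂μ := by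
    intro n hn
    induction hn using AddSubgroup.closure_induction with
    | mem m hm => exact hsupp m hm
    | zero => exact ⟨0, le_refl 0, fun x => by simp [nd_zero]⟩
    | add a b ha hb iha ihb =>
        obtain ⟨C₁, hC₁, h₁⟩ := iha
        obtain ⟨C₂, hC₂, h₂⟩ := ihb
        refine ⟨2 * (C₁ + C₂), by positivity, fun x => ?_⟩
        have hadd : nd (((a + b : ℤ) : ℝ) * x) ≤ nd ((a : ℝ) * x) + nd ((b : ℝ) * x) := by
          have : ((a + b : ℤ) : ℝ) * x = (a : ℝ) * x + (b : ℝ) * x := by push_cast; ring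
          rw [this]; exact nd_add_le _ _
        have h1 := h₁ x; have h2 := h₂ x
        have hnn1 := nd_nonneg ((a : ℝ) * x)
        have hnn2 := nd_nonneg ((b : ℝ) * x)
        have hnn := nd_nonneg (((a + b : ℤ) : ℝ) * x)
        nlinarith [hIntNonneg x, mul_self_le_mul_self hnn hadd,
          sq_nonneg (nd ((a : ℝ) * x) - nd ((b : ℝ) * x)),
          mul_nonneg hC₁ (hIntNonneg x), mul_nonneg hC₂ (hIntNonneg x)]
    | neg a ha iha =>
        obtain ⟨C, hC, h⟩ := iha
        refine ⟨C, hC, fun x => ?_⟩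
        have : ((-a : ℤ) : ℝ) * x = -((a : ℝ) * x) := by push_cast; ring
        rw [this, nd_neg]
        exact h x
  -- L is in the closure of the support
  have hLmem : ((L : ℤ)) ∈ AddSubgroup.closure S := by
    obtain ⟨g, hg⟩ := Int.subgroup_cyclic (AddSubgroup.closure S)
    have hgmem : g ∈ AddSubgroup.closure S := by
      rw [hg]; exact AddSubgroup.subset_closure rfl
    have hgdvd : ∀ n : ℤ, 0 < μ (X ⁻¹' {n}) → (g.natAbs : ℤ) ∣ n := by
      intro n hn
      have hnS : n ∈ S := by simpa [hSdef] using hn.ne'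
      have : n ∈ AddSubgroup.closure S := AddSubgroup.subset_closure hnS
      rw [hg, AddSubgroup.mem_closure_singleton] at this
      obtain ⟨k, hk⟩ := this
      rw [Int.natAbs_dvd]
      simp only [zsmul_eq_mul, Int.cast_id] at hk
      exact Dvd.intro_left k hk
    have h1 : g.natAbs ∣ L := hLmax g.natAbs hgdvd
    have h2 : (L : ℤ) ∣ g := by
      have hle : AddSubgroup.closure S ≤ AddSubgroup.closure {(L : ℤ)} := by
        rw [AddSubgroup.closure_le]
        intro n hnS
        have hn : 0 < μ (X ⁻¹' {n}) := by
          simp only [hSdef, Set.mem_setOf_eq] at hnS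
          exact pos_iff_ne_zero.mpr hnS
        obtain ⟨k, hk⟩ := hLdvd n hn
        refine AddSubgroup.mem_closure_singleton.mpr ⟨k, ?_⟩
        simp only [zsmul_eq_mul, Int.cast_id]
        rw [hk]; ring
      have := hle hgmem
      rw [AddSubgroup.mem_closure_singleton] at this
      obtain ⟨k, hk⟩ := this
      simp only [zsmul_eq_mul, Int.cast_id] at hk
      exact Dvd.intro_left k hk
    have h2' : L ∣ g.natAbs := by
      have := Int.natAbs_dvd_natAbs.mpr h2
      simpa using this
    have hLg : L = g.natAbs := Nat.dvd_antisymm h2' h1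
    rcases Int.natAbs_eq g with h | h
    · rw [hLg, ← h]; exact hgmem
    · have : (L : ℤ) = -g := by rw [hLg]; omega
      rw [this]; exact neg_mem hgmem
  obtain ⟨C, hC0, hCx⟩ := hP (L : ℤ) hLmem
  -- final constant
  refine ⟨8 / (C + 1), by positivity, fun x => ?_⟩
  -- integrability of cos
  have hintcos : Integrable (fun ω => Real.cos (2 * π * x * (X ω : ℝ))) μ :=
    hintg (fun n => Real.cos (2 * π * x * (n : ℝ))) 1 fun n => Real.abs_cos_le_one _
  -- real part of φ
  have hre : (φ (2 * π * x)).re = ∫ ω, Real.cos (2 * π * x * (X ω : ℝ)) ∂μ := by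
    rw [hφ]
    have hintexp : Integrable (fun ω => Complex.exp (Complex.I * ((2 * π * x : ℝ) : ℂ) * (X ω : ℂ))) μ := by
      refine (integrable_const (1 : ℝ)).mono'
        ((measurable_of_countable fun n : ℤ =>
          Complex.exp (Complex.I * ((2 * π * x : ℝ) : ℂ) * (n : ℂ))).comp hX).aestronglyMeasurable
        (Filter.Eventually.of_forall fun ω => by simpa using exp_I_norm (2 * π * x) (X ω))
    have h := integral_re (𝕜 := ℂ) hintexp
    simp only [RCLike.re_to_complex] at h
    rw [← h]
    congr 1
    ext ω
    exact exp_I_re (2 * π * x) (X ω)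
  -- chain of inequalities
  have hchain : 8 * ∫ ω, nd ((X ω : ℝ) * x) ^ 2 ∂μ ≤ (1 - φ (2 * π * x)).re := by
    have h1int : Integrable (fun ω => 1 - Real.cos (2 * π * x * (X ω : ℝ))) μ :=
      (integrable_const 1).sub hintcos
    have hmono : ∫ ω, 8 * nd ((X ω : ℝ) * x) ^ 2 ∂μ
        ≤ ∫ ω, (1 - Real.cos (2 * π * x * (X ω : ℝ))) ∂μ := by
      refine integral_mono ((hint x).const_mul 8) h1int fun ω => ?_
      have := key_cos ((X ω : ℝ) * x)
      have harg : 2 * π * ((X ω : ℝ) * x) = 2 * π * x * (X ω : ℝ) := by ring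
      rw [harg] at this
      exact this
    rw [integral_const_mul] at hmono
    have hsub : ∫ ω, (1 - Real.cos (2 * π * x * (X ω : ℝ))) ∂μ
        = 1 - ∫ ω, Real.cos (2 * π * x * (X ω : ℝ)) ∂μ := by
      rw [integral_sub (integrable_const 1) hintcos]
      simp
    rw [hsub] at hmono
    rw [Complex.sub_re, Complex.one_re, hre]
    exact hmono
  have habs : (1 - φ (2 * π * x)).re ≤ ‖1 - φ (2 * π * x)‖ :=
    (le_abs_self _).trans (Complex.abs_re_le_norm _)
  have hL : nd ((L : ℝ) * x) ^ 2 ≤ C * ∫ ω, nd ((X ω : ℝ) * x) ^ 2 ∂μ := by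
    have := hCx x
    simpa using this
  have hI := hIntNonneg x
  have hfinal : 8 / (C + 1) * nd ((L : ℝ) * x) ^ 2 ≤ 8 * ∫ ω, nd ((X ω : ℝ) * x) ^ 2 ∂μ := by
    rw [div_mul_eq_mul_div, div_le_iff₀ (by positivity : (0:ℝ) < C + 1)]
    nlinarith [nd_nonneg ((L : ℝ) * x)]
  calc 8 / (C + 1) * nd ((L : ℝ) * x) ^ 2
      ≤ 8 * ∫ ω, nd ((X ω : ℝ) * x) ^ 2 ∂μ := hfinal
    _ ≤ (1 - φ (2 * π * x)).re := hchain
    _ ≤ ‖1 - φ (2 * π * x)‖ := habs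
end
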